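/- Let f(x) = ∑_{m≥0} q^{C(m+1,2)} x^m over the field of rational functions ℚ(q) (or over ℚ[q], noting f has constant term 1 so it is invertible as a power series). For k ≥ 1 write 1/f(x)^k = ∑_{n≥0} u_k(n,q) x^n. Then for n ≥ 1, u_k(n,q) = -q^n · ∑_{j=0}^{n-1} (-1)^j · ⟨n-1, j⟩_q · C(k+j, k-1), where ⟨m, j⟩_q is the coefficient of x^{m-j} in f(x)^{j+1}. -/

import Mathlib

noncomputable def f : PowerSeries (Polynomial ℚ) :=
  PowerSeries.mk fun m => (Polynomial.X : Polynomial ℚ) ^ Nat.choose (m + 1) 2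

noncomputable def angle (n k : ℕ) : Polynomial ℚ :=
  PowerSeries.coeff (R := Polynomial ℚ) (n - k) (f ^ (k + 1))

/-- `u_k(n,q)`, the coefficient of `x^n` in `f(x)^{-k}` (using the inverse of `f`,
which exists since the constant coefficient of `f` is `1`). -/
noncomputable def u (k n : ℕ) : Polynomial ℚ :=
  PowerSeries.coeff (R := Polynomial ℚ) n ((PowerSeries.invOfUnit f 1) ^ k)

namespace NegPowerAux

abbrev R := Polynomial ℚ

lemma const_f : PowerSeries.constantCoeff (R := R) f = 1 := by
  simp [f, PowerSeries.constantCoeff_mk]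

lemma f_mul_inv : f * PowerSeries.invOfUnit f 1 = 1 :=
  PowerSeries.mul_invOfUnit f 1 (by simp [const_f])

lemma choose_succ_two (m : ℕ) : (m + 1 + 1).choose 2 = 1 + m + (m + 1).choose 2 := by
  have h : (m + 1 + 1).choose 2 = (m + 1) + (m + 1).choose 2 := by
    rw [show (2:ℕ) = 1 + 1 from rfl, Nat.choose_succ_succ, Nat.choose_one_right]
  omega

lemma g_eq : f - 1 = PowerSeries.X * (PowerSeries.C (R := R) Polynomial.X *
    PowerSeries.rescale Polynomial.X f) := by
  apply PowerSeries.ext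
  intro n
  cases n with
  | zero => simp [const_f, f]
  | succ m =>
    rw [PowerSeries.coeff_succ_X_mul, PowerSeries.coeff_C_mul, PowerSeries.coeff_rescale,
      map_sub]
    have h1 : (PowerSeries.coeff (R := R) (m + 1)) (1 : PowerSeries R) = 0 := by simp
    rw [h1, sub_zero]
    simp only [f, PowerSeries.coeff_mk]
    rw [← mul_assoc, ← pow_succ', ← pow_add]
    congr 1
    have := choose_succ_two m
    omega

lemma X_dvd_g : (PowerSeries.X : PowerSeries R) ∣ (f - 1) := ⟨_, g_eq⟩

lemma coeff_g_pow_zero {m p : ℕ} (h : m < p) :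
    PowerSeries.coeff (R := R) m ((f - 1) ^ p) = 0 := by
  have hd : (PowerSeries.X : PowerSeries R) ^ p ∣ (f - 1) ^ p :=
    pow_dvd_pow_of_dvd X_dvd_g p
  exact PowerSeries.X_pow_dvd_iff.mp hd m h

lemma coeff_g_pow' (a j : ℕ) :
    PowerSeries.coeff (R := R) (a + j) ((f - 1) ^ j) =
      Polynomial.X ^ (a + j) * PowerSeries.coeff (R := R) a (f ^ j) := by
  rw [g_eq, mul_pow, mul_pow, ← map_pow, ← map_pow, PowerSeries.coeff_X_pow_mul,
    PowerSeries.coeff_C_mul, PowerSeries.coeff_rescale, ← mul_assoc, ← pow_add]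
  congr 2
  omega

lemma coeff_g_pow {n j : ℕ} (h : j ≤ n) :
    PowerSeries.coeff (R := R) n ((f - 1) ^ j) =
      Polynomial.X ^ n * PowerSeries.coeff (R := R) (n - j) (f ^ j) := by
  have := coeff_g_pow' (n - j) j
  rw [show n - j + j = n by omega] at this
  exact this

/-- The power series `∑ (-1)^j C(d+j,d) x^j`, inverse of `(1+x)^{d+1}`. -/
noncomputable def B (d : ℕ) : PowerSeries R :=
  PowerSeries.mk fun j => (-1) ^ j * (((d + j).choose d : R))

lemma one_add_X_pow_mul_B (d : ℕ) :
    ((1 + PowerSeries.X) ^ (d + 1) : PowerSeries R) * B d = 1 := by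
  have h := PowerSeries.mk_add_choose_mul_one_sub_pow_eq_one (S := R) (d := d)
  have h2 := congrArg (PowerSeries.rescale (-1 : R)) h
  rw [map_mul, map_pow, map_sub, map_one, PowerSeries.rescale_X] at h2
  simp only [PowerSeries.rescale_mk, map_neg, map_one, neg_one_mul, sub_neg_eq_add] at h2
  rw [mul_comm, B]
  exact h2

/-- Truncation of `B d` through degree `n`. -/
noncomputable def Sp (d n : ℕ) : Polynomial R :=
  ∑ j ∈ Finset.range (n + 1),
    Polynomial.C ((-1) ^ j * (((d + j).choose d : R))) * Polynomial.X ^ j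

lemma coeff_Sp {d n m : ℕ} (h : m ≤ n) :
    (Sp d n).coeff m = (-1) ^ m * (((d + m).choose d : R)) := by
  rw [Sp, Polynomial.finset_sum_coeff]
  simp only [Polynomial.coeff_C_mul, Polynomial.coeff_X_pow, mul_ite, mul_one, mul_zero]
  rw [Finset.sum_ite_eq (Finset.range (n + 1)) m]
  rw [if_pos (Finset.mem_range.mpr (by omega))]

lemma X_pow_dvd_sub (d n : ℕ) :
    (PowerSeries.X : PowerSeries R) ^ (n + 1) ∣ (B d - (Sp d n : Polynomial R)) := by
  rw [PowerSeries.X_pow_dvd_iff]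
  intro m hm
  rw [map_sub, Polynomial.coeff_coe, coeff_Sp (by omega), B, PowerSeries.coeff_mk, sub_self]

lemma exists_E (d n : ℕ) : ∃ E : Polynomial R,
    (1 + Polynomial.X) ^ (d + 1) * Sp d n = 1 + Polynomial.X ^ (n + 1) * E := by
  set P : Polynomial R := (1 + Polynomial.X) ^ (d + 1) * Sp d n - 1 with hP
  have hcoe : (P : PowerSeries R) =
      ((1 + PowerSeries.X) ^ (d + 1) : PowerSeries R) * (Sp d n : Polynomial R) - 1 := by
    rw [hP]
    push_cast [Polynomial.coe_sub, Polynomial.coe_mul, Polynomial.coe_pow, Polynomial.coe_add,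
      Polynomial.coe_one, Polynomial.coe_X]
    ring
  have hPps : (P : PowerSeries R) =
      -(((1 + PowerSeries.X) ^ (d + 1) : PowerSeries R) * (B d - (Sp d n : Polynomial R))) := by
    rw [hcoe]
    linear_combination one_add_X_pow_mul_B d
  have hdvd : (PowerSeries.X : PowerSeries R) ^ (n + 1) ∣ (P : PowerSeries R) := by
    rw [hPps]
    exact dvd_neg.mpr ((X_pow_dvd_sub d n).mul_left _)
  have hdvdP : (Polynomial.X : Polynomial R) ^ (n + 1) ∣ P := by
    rw [Polynomial.X_pow_dvd_iff]
    intro l hl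
    have := PowerSeries.X_pow_dvd_iff.mp hdvd l hl
    rwa [Polynomial.coeff_coe] at this
  obtain ⟨E, hE⟩ := hdvdP
  exact ⟨E, by rw [← hE, hP]; ring⟩

lemma key (d n : ℕ) : ∃ E' : PowerSeries R,
    f ^ (d + 1) * (Polynomial.eval₂ (PowerSeries.C (R := R)) (f - 1) (Sp d n)) =
      1 + (f - 1) ^ (n + 1) * E' := by
  obtain ⟨E, hE⟩ := exists_E d n
  have h := congrArg (Polynomial.eval₂RingHom (PowerSeries.C (R := R)) (f - 1)) hE
  simp only [map_mul, map_pow, map_add, map_one, Polynomial.coe_eval₂RingHom,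
    Polynomial.eval₂_X] at h
  rw [show (1 : PowerSeries R) + (f - 1) = f by ring] at h
  exact ⟨Polynomial.eval₂ (PowerSeries.C (R := R)) (f - 1) E, h⟩

lemma coeff_inv_pow (d n : ℕ) (hn : 1 ≤ n) :
    PowerSeries.coeff (R := R) n ((PowerSeries.invOfUnit f 1) ^ (d + 1)) =
      ∑ j ∈ Finset.range (n + 1),
        (-1) ^ j * (((d + j).choose d : R)) *
          (Polynomial.X ^ n * PowerSeries.coeff (R := R) (n - j) (f ^ j)) := by
  obtain ⟨E', hE'⟩ := key d n
  set inv := PowerSeries.invOfUnit f 1 with hinv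
  set S := Polynomial.eval₂ (PowerSeries.C (R := R)) (f - 1) (Sp d n) with hS
  have hfi : f ^ (d + 1) * inv ^ (d + 1) = 1 := by
    rw [← mul_pow, f_mul_inv, one_pow]
  have hdiff : inv ^ (d + 1) - S = -((f - 1) ^ (n + 1) * (inv ^ (d + 1) * E')) := by
    have hss : inv ^ (d + 1) * (f ^ (d + 1) * S) = S := by
      rw [← mul_assoc, mul_comm (inv ^ (d+1)), hfi, one_mul]
    calc inv ^ (d + 1) - S = inv ^ (d + 1) - inv ^ (d + 1) * (f ^ (d + 1) * S) := by rw [hss]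
    _ = inv ^ (d + 1) * (1 - f ^ (d + 1) * S) := by ring
    _ = -((f - 1) ^ (n + 1) * (inv ^ (d + 1) * E')) := by rw [hE']; ring
  have hzero : PowerSeries.coeff (R := R) n (inv ^ (d + 1) - S) = 0 := by
    rw [hdiff, map_neg]
    have hc : PowerSeries.coeff (R := R) n ((f - 1) ^ (n + 1) * (inv ^ (d + 1) * E')) = 0 := by
      have hd : (PowerSeries.X : PowerSeries R) ^ (n + 1) ∣
          (f - 1) ^ (n + 1) * (inv ^ (d + 1) * E') :=
        Dvd.dvd.mul_right (pow_dvd_pow_of_dvd X_dvd_g (n + 1)) _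
      exact PowerSeries.X_pow_dvd_iff.mp hd n (by omega)
    rw [hc, neg_zero]
  have heq : PowerSeries.coeff (R := R) n (inv ^ (d + 1)) = PowerSeries.coeff (R := R) n S := by
    rw [map_sub, sub_eq_zero] at hzero
    exact hzero
  rw [heq, hS, Sp, Polynomial.eval₂_finset_sum, map_sum]
  apply Finset.sum_congr rfl
  intro j hj
  rw [Polynomial.eval₂_mul, Polynomial.eval₂_C, Polynomial.eval₂_X_pow,
    PowerSeries.coeff_C_mul, coeff_g_pow (Nat.lt_succ_iff.mp (Finset.mem_range.mp hj))]

end NegPowerAux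

theorem neg_power_coeff (k n : ℕ) (hk : 1 ≤ k) (hn : 1 ≤ n) :
    u k n = -Polynomial.X ^ n *
      ∑ j ∈ Finset.range n,
        (-1) ^ j * angle (n - 1) j * ((k + j).choose (k - 1) : Polynomial ℚ) := by
  obtain ⟨d, rfl⟩ : ∃ d, k = d + 1 := ⟨k - 1, by omega⟩
  rw [u, NegPowerAux.coeff_inv_pow d n hn, Finset.sum_range_succ']
  have h0 : (-1 : Polynomial ℚ) ^ 0 * (((d + 0).choose d : Polynomial ℚ)) *
      (Polynomial.X ^ n * PowerSeries.coeff (R := Polynomial ℚ) (n - 0) (f ^ 0)) = 0 := by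
    have : PowerSeries.coeff (R := Polynomial ℚ) (n - 0) ((f : PowerSeries (Polynomial ℚ)) ^ 0) = 0 := by
      rw [pow_zero, PowerSeries.coeff_one, if_neg (by omega)]
    rw [this, mul_zero, mul_zero]
  rw [h0, add_zero, Finset.mul_sum]
  apply Finset.sum_congr rfl
  intro j hj
  have h1 : n - (j + 1) = (n - 1) - j := by omega
  rw [angle, h1, show d + 1 - 1 = d from rfl, show d + 1 + j = d + (j + 1) by ring]
  ring
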